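/- For every real number u, 1 − |cos(πu)| ≥ π (d(u,ℤ))², where d(u,ℤ) denotes the distance from u to the nearest integer. -/

import Mathlib

open Real

lemma key_aux : ∀ x ∈ Set.Icc (0:ℝ) (1/2), Real.pi * x ^ 2 ≤ 1 - Real.cos (Real.pi * x) := by
  set f : ℝ → ℝ := fun x => 1 - Real.cos (Real.pi * x) - Real.pi * x ^ 2 with hf
  have hderiv : ∀ x : ℝ, HasDerivAt f (Real.pi * Real.sin (Real.pi * x) - Real.pi * (2 * x)) x := by
    intro x
    have h1 : HasDerivAt (fun x : ℝ => Real.pi * x) Real.pi x := by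
      simpa using (hasDerivAt_id x).const_mul Real.pi
    have h2 : HasDerivAt (fun x : ℝ => Real.cos (Real.pi * x))
        (-Real.sin (Real.pi * x) * Real.pi) x := (Real.hasDerivAt_cos _).comp x h1
    have h3 : HasDerivAt (fun x : ℝ => Real.pi * x ^ 2) (Real.pi * (2 * x)) x := by
      simpa using ((hasDerivAt_pow 2 x).const_mul Real.pi)
    have := ((hasDerivAt_const x (1:ℝ)).sub h2).sub h3
    refine this.congr_deriv ?_
    ring
  have hmono : MonotoneOn f (Set.Icc (0:ℝ) (1/2)) := by
    apply monotoneOn_of_deriv_nonneg (convex_Icc _ _)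
    · exact (Continuous.sub (by continuity) (by continuity)).continuousOn
    · intro x hx
      exact (hderiv x).differentiableAt.differentiableWithinAt
    · intro x hx
      rw [(hderiv x).deriv]
      rw [interior_Icc, Set.mem_Ioo] at hx
      have h1 : 2 / Real.pi * (Real.pi * x) ≤ Real.sin (Real.pi * x) :=
        Real.mul_le_sin (mul_nonneg Real.pi_pos.le hx.1.le) (by nlinarith [Real.pi_pos])
      have hpi := Real.pi_pos
      have : 2 / Real.pi * (Real.pi * x) = 2 * x := by field_simp
      nlinarith
  intro x hx
  have h0 : f 0 ≤ f x := hmono (by constructor <;> norm_num) hx hx.1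
  simp only [hf] at h0
  norm_num at h0
  linarith

/-- For every real `u`, `1 − |cos(πu)| ≥ π d(u,ℤ)²`, where `d(u,ℤ) = |u - round u|`
is the distance from `u` to the nearest integer. -/
theorem stmt_16 (u : ℝ) :
    Real.pi * |u - round u| ^ 2 ≤ 1 - |Real.cos (Real.pi * u)| := by
  set x : ℝ := u - round u with hx
  have hd : |x| ≤ 1/2 := by simpa using abs_sub_round u
  have habs : |Real.cos (Real.pi * u)| = Real.cos (Real.pi * |x|) := by
    have : Real.pi * u = (round u : ℤ) * Real.pi + Real.pi * x := by
      push_cast; ring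
    rw [this, Real.cos_add, Real.sin_int_mul_pi, zero_mul, sub_zero, abs_mul,
      Real.abs_cos_int_mul_pi, one_mul]
    rw [← Real.cos_abs (Real.pi * x), abs_mul, abs_of_nonneg Real.pi_pos.le]
    apply abs_of_nonneg
    apply Real.cos_nonneg_of_mem_Icc
    have h0 : 0 ≤ Real.pi * |x| := mul_nonneg Real.pi_pos.le (abs_nonneg x)
    constructor
    · linarith [Real.pi_pos]
    · nlinarith [Real.pi_pos, abs_nonneg x]
  rw [habs]
  exact key_aux |x| ⟨abs_nonneg x, hd⟩
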